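/- Let p, q : U → ℝ be C² functions on an open set U ⊆ {(x,y) : x + y > 0} satisfying p_y = q/(x+y) and q_x = p/(x+y). Then the function L = q_y + q/(x+y) satisfies ∂_x L = 0 on U; i.e., L is an intermediate integral (first integral in x) of the system. -/

import Mathlib

noncomputable def pdx (f : ℝ × ℝ → ℝ) (z : ℝ × ℝ) : ℝ := deriv (fun t => f (t, z.2)) z.1

noncomputable def pdy (f : ℝ × ℝ → ℝ) (z : ℝ × ℝ) : ℝ := deriv (fun t => f (z.1, t)) z.2

private lemma sliceX (f : ℝ × ℝ → ℝ) (w : ℝ × ℝ) (hf : DifferentiableAt ℝ f w) :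
    HasDerivAt (fun t => f (t, w.2)) (fderiv ℝ f w ((1:ℝ), (0:ℝ))) w.1 := by
  have h1 : HasDerivAt (fun t : ℝ => (t, w.2)) ((1:ℝ), (0:ℝ)) w.1 :=
    (hasDerivAt_id w.1).prodMk (hasDerivAt_const w.1 w.2)
  exact hf.hasFDerivAt.comp_hasDerivAt w.1 h1

private lemma sliceY (f : ℝ × ℝ → ℝ) (w : ℝ × ℝ) (hf : DifferentiableAt ℝ f w) :
    HasDerivAt (fun t => f (w.1, t)) (fderiv ℝ f w ((0:ℝ), (1:ℝ))) w.2 := by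
  have h1 : HasDerivAt (fun t : ℝ => (w.1, t)) ((0:ℝ), (1:ℝ)) w.2 :=
    (hasDerivAt_const w.2 w.1).prodMk (hasDerivAt_id w.2)
  exact hf.hasFDerivAt.comp_hasDerivAt w.2 h1

private lemma pdx_eq (f : ℝ × ℝ → ℝ) (w : ℝ × ℝ) (hf : DifferentiableAt ℝ f w) :
    pdx f w = fderiv ℝ f w ((1:ℝ), (0:ℝ)) := (sliceX f w hf).deriv

private lemma pdy_eq (f : ℝ × ℝ → ℝ) (w : ℝ × ℝ) (hf : DifferentiableAt ℝ f w) :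
    pdy f w = fderiv ℝ f w ((0:ℝ), (1:ℝ)) := (sliceY f w hf).deriv

/-- For C² solutions of p_y = q/(x+y), q_x = p/(x+y) on U ⊆ {x+y>0},
the function L = q_y + q/(x+y) satisfies ∂_x L = 0 on U: it is an
intermediate integral of the system. -/
theorem intermediate_integral_n1
    (U : Set (ℝ × ℝ)) (hU : IsOpen U) (hU' : ∀ z ∈ U, 0 < z.1 + z.2)
    (p q : ℝ × ℝ → ℝ)
    (hp : ContDiffOn ℝ 2 p U) (hq : ContDiffOn ℝ 2 q U)
    (hpy : ∀ z ∈ U, pdy p z = q z / (z.1 + z.2))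
    (hqx : ∀ z ∈ U, pdx q z = p z / (z.1 + z.2)) :
    ∀ z ∈ U, pdx (fun w => pdy q w + q w / (w.1 + w.2)) z = 0 := by
  have hqd : ∀ w ∈ U, DifferentiableAt ℝ q w := fun w hw =>
    (hq.contDiffAt (hU.mem_nhds hw)).differentiableAt two_ne_zero
  have hpd : ∀ w ∈ U, DifferentiableAt ℝ p w := fun w hw =>
    (hp.contDiffAt (hU.mem_nhds hw)).differentiableAt two_ne_zero
  intro z hz
  set s : ℝ := z.1 + z.2 with hs_def
  have hs0 : (0:ℝ) < s := hU' z hz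
  have hs : s ≠ 0 := ne_of_gt hs0
  have hq2 : ContDiffAt ℝ 2 q z := hq.contDiffAt (hU.mem_nhds hz)
  have hq1 : ContDiffAt ℝ 1 (fderiv ℝ q) z := hq2.fderiv_right (by norm_num)
  set Φ : (ℝ × ℝ) →L[ℝ] (ℝ × ℝ) →L[ℝ] ℝ := fderiv ℝ (fderiv ℝ q) z with hΦ_def
  have hΦ : HasFDerivAt (fderiv ℝ q) Φ z := (hq1.differentiableAt one_ne_zero).hasFDerivAt
  have hsym : ∀ v w, Φ v w = Φ w v := hq2.isSymmSndFDerivAt (by norm_num)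
  -- x-slice of q at z
  have hqz := hqd z hz
  have hpz := hpd z hz
  -- Compute Φ (0,1) (1,0) via the relation q_x = p/(x+y)
  have hA' : HasDerivAt (fun t => fderiv ℝ q (z.1, t) ((1:ℝ),(0:ℝ))) (Φ ((0:ℝ),(1:ℝ)) ((1:ℝ),(0:ℝ))) z.2 := by
    have hc : HasFDerivAt (fun w => fderiv ℝ q w ((1:ℝ),(0:ℝ)))
        (((fderiv ℝ q z).comp (0 : (ℝ×ℝ) →L[ℝ] (ℝ×ℝ))) + Φ.flip ((1:ℝ),(0:ℝ))) z :=
      hΦ.clm_apply (hasFDerivAt_const _ _)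
    have h1 : HasDerivAt (fun t : ℝ => (z.1, t)) ((0:ℝ), (1:ℝ)) z.2 :=
      (hasDerivAt_const z.2 z.1).prodMk (hasDerivAt_id z.2)
    have := hc.comp_hasDerivAt z.2 h1
    simpa [Function.comp_def] using this
  have hyU : {t : ℝ | (z.1, t) ∈ U} ∈ nhds z.2 := by
    have hcont : Continuous fun t : ℝ => (z.1, t) := by fun_prop
    exact (hU.preimage hcont).mem_nhds (by simpa using hz)
  have heq1 : (fun t => fderiv ℝ q (z.1, t) ((1:ℝ),(0:ℝ)))
      =ᶠ[nhds z.2] (fun t => p (z.1, t) / (z.1 + t)) := by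
    filter_upwards [hyU] with t ht
    rw [← pdx_eq q (z.1, t) (hqd _ ht)]
    exact hqx _ ht
  have key1 : Φ ((0:ℝ),(1:ℝ)) ((1:ℝ),(0:ℝ)) = (q z - p z) / s ^ 2 := by
    have hRHS : HasDerivAt (fun t => p (z.1, t) / (z.1 + t))
        ((fderiv ℝ p z ((0:ℝ),(1:ℝ)) * s - p z * 1) / s ^ 2) z.2 := by
      have hden : HasDerivAt (fun t : ℝ => z.1 + t) 1 z.2 := by
        simpa using (hasDerivAt_id z.2).const_add z.1
      exact (sliceY p z hpz).div hden hs
    have h1 : fderiv ℝ p z ((0:ℝ),(1:ℝ)) = q z / s := by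
      rw [← pdy_eq p z hpz]; exact hpy z hz
    have h2 := hA'.deriv
    rw [heq1.deriv_eq, hRHS.deriv] at h2
    rw [← h2, h1]
    field_simp
  -- Now compute the target
  have hxU : {t : ℝ | (t, z.2) ∈ U} ∈ nhds z.1 := by
    have hcont : Continuous fun t : ℝ => (t, z.2) := by fun_prop
    exact (hU.preimage hcont).mem_nhds (by simpa using hz)
  have heq2 : (fun t => pdy q (t, z.2) + q (t, z.2) / (t + z.2))
      =ᶠ[nhds z.1] (fun t => fderiv ℝ q (t, z.2) ((0:ℝ),(1:ℝ)) + q (t, z.2) / (t + z.2)) := by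
    filter_upwards [hxU] with t ht
    rw [pdy_eq q (t, z.2) (hqd _ ht)]
  have hA : HasDerivAt (fun t => fderiv ℝ q (t, z.2) ((0:ℝ),(1:ℝ))) (Φ ((1:ℝ),(0:ℝ)) ((0:ℝ),(1:ℝ))) z.1 := by
    have hc : HasFDerivAt (fun w => fderiv ℝ q w ((0:ℝ),(1:ℝ)))
        (((fderiv ℝ q z).comp (0 : (ℝ×ℝ) →L[ℝ] (ℝ×ℝ))) + Φ.flip ((0:ℝ),(1:ℝ))) z :=
      hΦ.clm_apply (hasFDerivAt_const _ _)
    have h1 : HasDerivAt (fun t : ℝ => (t, z.2)) ((1:ℝ), (0:ℝ)) z.1 :=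
      (hasDerivAt_id z.1).prodMk (hasDerivAt_const z.1 z.2)
    have := hc.comp_hasDerivAt z.1 h1
    simpa [Function.comp_def] using this
  have hB : HasDerivAt (fun t => q (t, z.2) / (t + z.2))
      ((fderiv ℝ q z ((1:ℝ),(0:ℝ)) * s - q z * 1) / s ^ 2) z.1 := by
    have hden : HasDerivAt (fun t : ℝ => t + z.2) 1 z.1 := by
      simpa using (hasDerivAt_id z.1).add_const z.2
    exact (sliceX q z hqz).div hden hs
  have h3 : fderiv ℝ q z ((1:ℝ),(0:ℝ)) = p z / s := by
    rw [← pdx_eq q z hqz]; exact hqx z hz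
  have hsum := (hA.add hB).deriv
  have : pdx (fun w => pdy q w + q w / (w.1 + w.2)) z
      = Φ ((1:ℝ),(0:ℝ)) ((0:ℝ),(1:ℝ)) + (fderiv ℝ q z ((1:ℝ),(0:ℝ)) * s - q z * 1) / s ^ 2 := by
    rw [← hsum]
    exact heq2.deriv_eq
  rw [this, hsym ((1:ℝ),(0:ℝ)) ((0:ℝ),(1:ℝ)), key1, h3]
  field_simp
  ring
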